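/- Let k be a field and G a group. Define D¹(k[G]) = k[G] × (k[G])[G] with componentwise addition and multiplication (α₁,β₁)*(α₂,β₂) = (α₁α₂, α₁β₂ + β₁α₂ + β₁β₂), where α₁α₂ is the group-ring product and the twisted products are (αβ)(g)(h) = Σ_t α(t)β(gt)(t⁻¹h), (βα)(g)(h) = Σ_t β(g)(t)α(t⁻¹h), (βγ)(g)(h) = Σ_t β(g)(t)γ(gt)(t⁻¹h). Then D¹(k[G]) is an associative unital ring with unit (1,0), and the map α ↦ (α,0) is an injective ring homomorphism k[G] → D¹(k[G]). -/

import Mathlib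

open Finsupp

/-- The twisted product `αβ` of `α ∈ k[G]` and `β ∈ (k[G])[G]`:
`(αβ)(g)(h) = Σ_t α(t) β(gt)(t⁻¹h)`. -/
noncomputable def tw1 {k G : Type*} [Field k] [Group G]
    (α : MonoidAlgebra k G) (β : G →₀ MonoidAlgebra k G) :
    G →₀ MonoidAlgebra k G :=
  α.coeff.sum fun t a =>
    Finsupp.equivMapDomain (Equiv.mulRight t⁻¹)
      (β.mapRange (fun γ => a • (MonoidAlgebra.single t (1 : k) * γ)) (by simp))

/-- The twisted product `βα` of `β ∈ (k[G])[G]` and `α ∈ k[G]`: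
`(βα)(g)(h) = Σ_t β(g)(t) α(t⁻¹h)`, i.e. `(βα)(g) = β(g) * α` in `k[G]`. -/
noncomputable def tw2 {k G : Type*} [Field k] [Group G]
    (β : G →₀ MonoidAlgebra k G) (α : MonoidAlgebra k G) :
    G →₀ MonoidAlgebra k G :=
  β.mapRange (fun γ => γ * α) (by simp)

/-- The twisted product `βγ` of `β, γ ∈ (k[G])[G]`:
`(βγ)(g)(h) = Σ_t β(g)(t) γ(gt)(t⁻¹h)`. -/
noncomputable def tw3 {k G : Type*} [Field k] [Group G]
    (β γ : G →₀ MonoidAlgebra k G) : G →₀ MonoidAlgebra k G :=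
  Finsupp.onFinset β.support
    (fun g => (β g).coeff.sum fun t b => b • (MonoidAlgebra.single t (1 : k) * γ (g * t)))
    (fun g hg => by
      by_contra hmem
      apply hg
      try dsimp only
      rw [Finsupp.notMem_support_iff.mp hmem, MonoidAlgebra.coeff_zero, Finsupp.sum_zero_index])

/-- `D¹(k[G]) = k[G] × (k[G])[G]` with componentwise addition. -/
def D1 (k G : Type*) [Field k] [Group G] :=
  MonoidAlgebra k G × (G →₀ MonoidAlgebra k G)

noncomputable instance {k G : Type*} [Field k] [Group G] : AddCommGroup (D1 k G) :=
  inferInstanceAs (AddCommGroup (MonoidAlgebra k G × (G →₀ MonoidAlgebra k G)))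

/-- The multiplication of `D¹(k[G])`:
`(α₁,β₁) * (α₂,β₂) = (α₁α₂, α₁β₂ + β₁α₂ + β₁β₂)` with twisted products. -/
noncomputable def dmul {k G : Type*} [Field k] [Group G] (x y : D1 k G) : D1 k G :=
  (x.1 * y.1, tw1 x.1 y.2 + tw2 x.2 y.1 + tw3 x.2 y.2)

/-- The unit `(1, 0)` of `D¹(k[G])`. -/
noncomputable def done (k G : Type*) [Field k] [Group G] : D1 k G :=
  ((1 : MonoidAlgebra k G), 0)

/-- The embedding `k[G] → D¹(k[G])`, `α ↦ (α, 0)`. -/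
noncomputable def emb (k G : Type*) [Field k] [Group G] (α : MonoidAlgebra k G) : D1 k G :=
  (α, 0)



section Aux

variable {k G : Type*} [Field k] [Group G]

lemma tw1_apply' (α : MonoidAlgebra k G) (β : G →₀ MonoidAlgebra k G) (g : G) :
    tw1 α β g = α.coeff.sum fun t a => a • (MonoidAlgebra.single t (1 : k) * β (g * t)) := by
  simp [tw1, Finsupp.sum_apply, Finsupp.equivMapDomain_apply, Finsupp.mapRange_apply]

lemma tw3_apply' (β γ : G →₀ MonoidAlgebra k G) (g : G) :
    tw3 β γ g = (β g).coeff.sum fun t b => b • (MonoidAlgebra.single t (1 : k) * γ (g * t)) := rfl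

lemma mul_expand (α γ : MonoidAlgebra k G) :
    α * γ = α.coeff.sum fun t a => a • (MonoidAlgebra.single t (1 : k) * γ) := by
  conv_lhs => rw [← MonoidAlgebra.sum_coeff_single α]
  rw [Finsupp.sum_mul]
  refine Finsupp.sum_congr fun t ht => ?_
  rw [← smul_mul_assoc, MonoidAlgebra.smul_single', mul_one]

noncomputable def psi (x : D1 k G) : MonoidAlgebra k G →ₗ[k] MonoidAlgebra k G :=
  Finsupp.linearCombination k (fun g => MonoidAlgebra.single g (1 : k) * (x.1 + x.2 g)) ∘ₗ
    (MonoidAlgebra.coeffLinearEquiv k).toLinearMap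

lemma psi_single (x : D1 k G) (g : G) (c : k) :
    psi x (MonoidAlgebra.single g c) = c • (MonoidAlgebra.single g (1 : k) * (x.1 + x.2 g)) :=
  Finsupp.linearCombination_single k c g

lemma psi_inj {x y : D1 k G} (h1 : x.1 = y.1) (h : psi x = psi y) : x = y := by
  have key : ∀ g : G, x.2 g = y.2 g := by
    intro g
    have h0 := congrArg (fun f : MonoidAlgebra k G →ₗ[k] MonoidAlgebra k G =>
      f (MonoidAlgebra.single g (1 : k))) h
    simp only [psi_single, one_smul] at h0
    have h2 := congrArg (fun z => MonoidAlgebra.single g⁻¹ (1 : k) * z) h0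
    simp only [← mul_assoc, MonoidAlgebra.single_mul_single, inv_mul_cancel, one_mul,
      ← MonoidAlgebra.one_def] at h2
    rw [h1] at h2
    exact add_left_cancel h2
  exact Prod.ext h1 (Finsupp.ext key)

lemma psi_mul_single (y : D1 k G) (g : G) (u : MonoidAlgebra k G) :
    psi y (MonoidAlgebra.single g (1 : k) * u) =
      MonoidAlgebra.single g (1 : k) *
        (u.coeff.sum fun t a => a • (MonoidAlgebra.single t (1 : k) * (y.1 + y.2 (g * t)))) := by
  have hu : MonoidAlgebra.single g (1 : k) * u = u.coeff.sum fun t a => MonoidAlgebra.single (g * t) a := by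
    conv_lhs => rw [← MonoidAlgebra.sum_coeff_single u]
    rw [Finsupp.mul_sum]
    exact Finsupp.sum_congr fun t ht => by
      rw [MonoidAlgebra.single_mul_single, one_mul]
  rw [hu, map_finsuppSum, Finsupp.mul_sum]
  refine Finsupp.sum_congr fun t ht => ?_
  rw [psi_single, mul_smul_comm, ← mul_assoc, MonoidAlgebra.single_mul_single, mul_one]

lemma psi_mul (x y : D1 k G) : psi (dmul x y) = (psi y).comp (psi x) := by
  refine MonoidAlgebra.lhom_ext' fun g => LinearMap.ext fun c => ?_
  show psi (dmul x y) (MonoidAlgebra.single g c) = psi y (psi x (MonoidAlgebra.single g c))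
  simp only [psi_single, map_smul, psi_mul_single]
  congr 1
  congr 1
  show x.1 * y.1 + (tw1 x.1 y.2 + tw2 x.2 y.1 + tw3 x.2 y.2) g
      = (x.1 + x.2 g).coeff.sum fun t a => a • (MonoidAlgebra.single t (1 : k) * (y.1 + y.2 (g * t)))
  rw [MonoidAlgebra.coeff_add, Finsupp.sum_add_index' (fun t => by simp) (fun t a b => add_smul a b _)]
  have e1 : ((x.1).coeff.sum fun t a => a • (MonoidAlgebra.single t (1 : k) * (y.1 + y.2 (g * t))))
      = x.1 * y.1 + tw1 x.1 y.2 g := by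
    rw [tw1_apply', mul_expand x.1 y.1, ← Finsupp.sum_add]
    exact Finsupp.sum_congr fun t ht => by rw [mul_add, smul_add]
  have e2 : ((x.2 g).coeff.sum fun t a => a • (MonoidAlgebra.single t (1 : k) * (y.1 + y.2 (g * t))))
      = x.2 g * y.1 + tw3 x.2 y.2 g := by
    rw [tw3_apply', mul_expand (x.2 g) y.1, ← Finsupp.sum_add]
    exact Finsupp.sum_congr fun t ht => by rw [mul_add, smul_add]
  rw [e1, e2]
  have e3 : tw2 x.2 y.1 g = x.2 g * y.1 := rfl
  simp only [Finsupp.add_apply, e3]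
  abel

lemma psi_one : psi (done k G) = LinearMap.id := by
  refine MonoidAlgebra.lhom_ext' fun g => LinearMap.ext fun c => ?_
  show psi (done k G) (MonoidAlgebra.single g c) = MonoidAlgebra.single g c
  rw [psi_single]
  show c • (MonoidAlgebra.single g (1 : k) *
      ((1 : MonoidAlgebra k G) + (0 : G →₀ MonoidAlgebra k G) g)) = _
  rw [Finsupp.coe_zero, Pi.zero_apply, add_zero, mul_one, MonoidAlgebra.smul_single', mul_one]

lemma psi_add (x y : D1 k G) : psi (x + y) = psi x + psi y := by
  refine MonoidAlgebra.lhom_ext' fun g => LinearMap.ext fun c => ?_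
  show psi (x + y) (MonoidAlgebra.single g c)
      = psi x (MonoidAlgebra.single g c) + psi y (MonoidAlgebra.single g c)
  rw [psi_single, psi_single, psi_single]
  show c • (MonoidAlgebra.single g (1 : k) * ((x.1 + y.1) + (x.2 g + y.2 g))) = _
  rw [← smul_add, ← mul_add]
  congr 1
  congr 1
  abel

end Aux

section T
variable {k G : Type*} [Field k] [Group G]
lemma b1 (a b c : D1 k G) : dmul (dmul a b) c = dmul a (dmul b c) := by
  refine psi_inj (mul_assoc a.1 b.1 c.1) ?_
  rw [psi_mul, psi_mul, psi_mul, psi_mul]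
  exact (LinearMap.comp_assoc _ _ _).symm
lemma b2 (a : D1 k G) : dmul (done k G) a = a := by
  refine psi_inj (one_mul a.1) ?_
  rw [psi_mul, psi_one, LinearMap.comp_id]
lemma b3 (a : D1 k G) : dmul a (done k G) = a := by
  refine psi_inj (mul_one a.1) ?_
  rw [psi_mul, psi_one, LinearMap.id_comp]
lemma b4 (a b c : D1 k G) : dmul a (b + c) = dmul a b + dmul a c := by
  refine psi_inj (mul_add a.1 b.1 c.1) ?_
  rw [psi_mul, psi_add, psi_add, psi_mul, psi_mul, LinearMap.add_comp]
lemma b5 (a b c : D1 k G) : dmul (a + b) c = dmul a c + dmul b c := by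
  refine psi_inj (add_mul a.1 b.1 c.1) ?_
  rw [psi_mul, psi_add, psi_add, psi_mul, psi_mul, LinearMap.comp_add]
lemma b7 (α β : MonoidAlgebra k G) : emb k G (α * β) = dmul (emb k G α) (emb k G β) := by
  have h1 : tw1 α (0 : G →₀ MonoidAlgebra k G) = 0 := by simp [tw1]
  have h2 : tw2 (0 : G →₀ MonoidAlgebra k G) β = 0 := by simp [tw2]
  have h3 : tw3 (0 : G →₀ MonoidAlgebra k G) 0 = 0 := by
    ext g
    rw [tw3_apply']
    simp
  show (α * β, (0 : G →₀ MonoidAlgebra k G)) = (α * β, tw1 α 0 + tw2 0 β + tw3 0 0)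
  rw [h1, h2, h3, add_zero, add_zero]
lemma b8 (α β : MonoidAlgebra k G) : emb k G (α + β) = emb k G α + emb k G β := by
  show ((α + β, 0) : D1 k G) = (α, 0) + (β, 0)
  refine Prod.ext rfl ?_
  exact (add_zero _).symm
end T

/-- `D¹(k[G])` is an associative unital ring with unit `(1,0)` (addition being
componentwise, which is already an abelian group structure), and `α ↦ (α, 0)`
is an injective ring homomorphism `k[G] → D¹(k[G])`. -/
theorem stmt11 {k G : Type*} [Field k] [Group G] :
    (∀ a b c : D1 k G, dmul (dmul a b) c = dmul a (dmul b c)) ∧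
    (∀ a : D1 k G, dmul (done k G) a = a) ∧
    (∀ a : D1 k G, dmul a (done k G) = a) ∧
    (∀ a b c : D1 k G, dmul a (b + c) = dmul a b + dmul a c) ∧
    (∀ a b c : D1 k G, dmul (a + b) c = dmul a c + dmul b c) ∧
    Function.Injective (emb k G) ∧
    (∀ α β : MonoidAlgebra k G, emb k G (α * β) = dmul (emb k G α) (emb k G β)) ∧
    (∀ α β : MonoidAlgebra k G, emb k G (α + β) = emb k G α + emb k G β) ∧
    emb k G 1 = done k G := by
  refine ⟨fun a b c => b1 a b c, fun a => b2 a, fun a => b3 a, fun a b c => b4 a b c,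
    fun a b c => b5 a b c, fun a b h => congrArg Prod.fst h, fun x y => b7 x y,
    fun x y => b8 x y, rfl⟩
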